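/- Let abc be candidate-anchored to u in a convex polygon P. Then abc is anchored to u if and only if Q₋₊(a,b,c) ≥ 0 and Q₊₋(a,b,c) ≤ 0. -/

import Mathlib

noncomputable section
open Set Real

/-- Points in the plane. -/
abbrev Pt : Type := ℝ × ℝ

/-- 2D wedge (cross) product. -/
def wedge (p q : Pt) : ℝ := p.1 * q.2 - p.2 * q.1

/-- Euclidean dot product on the plane. -/
def dotp (p q : Pt) : ℝ := p.1 * q.1 + p.2 * q.2

/-- Area of the triangle with vertices `a b c`. -/
def triArea (a b c : Pt) : ℝ := |wedge (b - a) (c - a)| / 2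

/-- `abc` is inscribed in `P`, counter-clockwise, with `u` an outer normal to the side `bc`. -/
def InscribedNormal (P : Set Pt) (u a b c : Pt) : Prop :=
  a ∈ P ∧ b ∈ P ∧ c ∈ P ∧ 0 ≤ wedge (b - a) (c - a) ∧
    dotp (c - b) u = 0 ∧ dotp a u ≤ dotp b u

/-- `abc` is anchored to `u` in `P`: it maximizes area among inscribed triangles
with `u` as outer normal to the side `bc`. -/
def Anchored (P : Set Pt) (u a b c : Pt) : Prop :=
  InscribedNormal P u a b c ∧
    ∀ a' b' c' : Pt, InscribedNormal P u a' b' c' → triArea a' b' c' ≤ triArea a b c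

/-- Euclidean length in the plane. -/
def elen (p : Pt) : ℝ := Real.sqrt (p.1 ^ 2 + p.2 ^ 2)

/-- Twice the signed area of the triangle `a b'(h) c'(h)`, where `b'(h)` and `c'(h)`
are the intersections of the line through `b`, `c` translated by `‖c-b‖·h·u` with the
lines `b + ℝv` and `c + ℝw`. Its derivative at `h = 0` is the area derivative `Q`. -/
def slideFam (a b c v w u : Pt) : ℝ → ℝ := fun h =>
  wedge ((b + (elen (c - b) * h / dotp v u) • v) - a)
        ((c + (elen (c - b) * h / dotp w u) • w) - a)

/-- `v` is a forward (counter-clockwise) tangent direction of `∂P` at the boundary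
point `x`: the boundary contains a segment from `x` in direction `v`, and `P` lies to
the left of the directed line through `x` with direction `v`. -/
def FwdTangent (P : Set Pt) (x v : Pt) : Prop :=
  (∃ ε > (0:ℝ), ∀ t ∈ Icc (0:ℝ) ε, x + t • v ∈ frontier P) ∧
    ∀ y ∈ P, 0 ≤ wedge v (y - x)

/-- `v` is a backward (clockwise) tangent direction of `∂P` at the boundary point `x`:
the boundary contains a segment arriving at `x` in direction `v`, and `P` lies to the
left of the directed line through `x` with direction `v`. -/
def BwdTangent (P : Set Pt) (x v : Pt) : Prop :=
  (∃ ε > (0:ℝ), ∀ t ∈ Icc (0:ℝ) ε, x - t • v ∈ frontier P) ∧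
    ∀ y ∈ P, 0 ≤ wedge v (y - x)

/-! ### Auxiliary lemmas -/

lemma wedge_coord (u : Pt) (hu : u.1 ^ 2 + u.2 ^ 2 = 1) (p q : Pt) :
    wedge p q = dotp p u * wedge u q - wedge u p * dotp q u := by
  simp only [wedge, dotp]
  linear_combination (p.2 * q.1 - p.1 * q.2) * hu

lemma pt_ext (u : Pt) (hu : u.1 ^ 2 + u.2 ^ 2 = 1) (p q : Pt)
    (h1 : dotp p u = dotp q u) (h2 : wedge u p = wedge u q) : p = q := by
  simp only [wedge, dotp] at h1 h2
  have e1 : p.1 = q.1 := by linear_combination u.1 * h1 - u.2 * h2 + (q.1 - p.1) * hu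
  have e2 : p.2 = q.2 := by linear_combination u.2 * h1 + u.1 * h2 + (q.2 - p.2) * hu
  exact Prod.ext e1 e2

lemma level_eq {u p q : Pt} (h : dotp (q - p) u = 0) : dotp q u = dotp p u := by
  simp only [dotp, Prod.fst_sub, Prod.snd_sub] at h ⊢
  linarith

lemma wedge_dir (u : Pt) (hu : u.1 ^ 2 + u.2 ^ 2 = 1) (v x p : Pt) :
    wedge v (x - p) = dotp v u * (wedge u x - wedge u p)
      - wedge u v * (dotp x u - dotp p u) := by
  have h := wedge_coord u hu v (x - p)
  simp only [wedge, dotp, Prod.fst_sub, Prod.snd_sub] at h ⊢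
  linear_combination h

lemma wedge_dir2 (u : Pt) (hu : u.1 ^ 2 + u.2 ^ 2 = 1) (p q w : Pt) :
    wedge (p - q) w = (dotp p u - dotp q u) * wedge u w
      - (wedge u p - wedge u q) * dotp w u := by
  have h := wedge_coord u hu (p - q) w
  simp only [wedge, dotp, Prod.fst_sub, Prod.snd_sub] at h ⊢
  linear_combination h

lemma wedge_level (u : Pt) (hu : u.1 ^ 2 + u.2 ^ 2 = 1) (p q r : Pt)
    (hqr : dotp r u = dotp q u) :
    wedge (q - p) (r - p) = (dotp q u - dotp p u) * (wedge u r - wedge u q) := by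
  have h := wedge_coord u hu (q - p) (r - p)
  simp only [wedge, dotp, Prod.fst_sub, Prod.snd_sub] at h hqr ⊢
  linear_combination h - ((u.1 * q.2 - u.2 * q.1) - (u.1 * p.2 - u.2 * p.1)) * hqr

lemma level_slide (u b c v w : Pt) (m : ℝ) (hv : dotp v u ≠ 0) (hw : dotp w u ≠ 0)
    (hbc : dotp (c - b) u = 0) :
    dotp ((c + (m / dotp w u) • w) - (b + (m / dotp v u) • v)) u = 0 := by
  simp only [dotp, Prod.fst_sub, Prod.snd_sub, Prod.fst_add, Prod.snd_add,
    Prod.smul_fst, Prod.smul_snd, smul_eq_mul] at hv hw hbc ⊢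
  have e1 : m / (w.1 * u.1 + w.2 * u.2) * (w.1 * u.1 + w.2 * u.2) = m := by field_simp
  have e2 : m / (v.1 * u.1 + v.2 * u.2) * (v.1 * u.1 + v.2 * u.2) = m := by field_simp
  linear_combination hbc + e1 - e2

lemma hasDerivAt_quadratic (k0 k1 k2 : ℝ) :
    HasDerivAt (fun h : ℝ => k0 + k1 * h + k2 * h ^ 2) k1 0 := by
  have h1 : HasDerivAt (fun h : ℝ => k1 * h) (k1 * 1) 0 := (hasDerivAt_id (0:ℝ)).const_mul k1
  have h2 : HasDerivAt (fun h : ℝ => k2 * h ^ 2) (k2 * (2 * 0 ^ 1)) 0 :=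
    (hasDerivAt_pow 2 (0:ℝ)).const_mul k2
  have h3 := ((hasDerivAt_const (0:ℝ) k0).add h1).add h2
  simp only [mul_one, pow_one, mul_zero, zero_add, add_zero] at h3
  exact h3

lemma slideFam_eq (a b c v w u : Pt) :
    slideFam a b c v w u = fun h =>
      wedge (b - a) (c - a)
      + (elen (c - b) / dotp v u * wedge v (c - a)
         + elen (c - b) / dotp w u * wedge (b - a) w) * h
      + (elen (c - b) / dotp v u * (elen (c - b) / dotp w u) * wedge v w) * h ^ 2 := by
  funext h
  simp only [slideFam, wedge, Prod.fst_add, Prod.snd_add, Prod.fst_sub, Prod.snd_sub,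
    Prod.smul_fst, Prod.smul_snd, smul_eq_mul]
  ring

lemma K1_eq (u a b c v w : Pt) (hu : u.1 ^ 2 + u.2 ^ 2 = 1) (L : ℝ)
    (hv : dotp v u ≠ 0) (hw : dotp w u ≠ 0) (hyc : dotp c u = dotp b u) :
    L / dotp v u * wedge v (c - a) + L / dotp w u * wedge (b - a) w
    = L * ((wedge u c - wedge u b)
        + (dotp b u - dotp a u) * (wedge u w / dotp w u - wedge u v / dotp v u)) := by
  rw [wedge_dir u hu v c a, wedge_dir2 u hu b a w]
  field_simp
  linear_combination (-(L * wedge u v * dotp w u)) * hyc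

lemma left_max_coeff (k0 k1 k2 ε : ℝ) (hε : 0 < ε)
    (h : ∀ x : ℝ, -ε ≤ x → x ≤ 0 → k0 + k1 * x + k2 * x ^ 2 ≤ k0) : 0 ≤ k1 := by
  by_contra hk
  push_neg at hk
  set M : ℝ := |k2| + 1 with hM
  have hM0 : 0 < M := by positivity
  have hq : 0 < -k1 / (2 * M) := div_pos (by linarith) (by positivity)
  set δ : ℝ := min ε (-k1 / (2 * M)) with hδdef
  have hδ2 : δ ≤ -k1 / (2 * M) := min_le_right _ _
  have hδ0 : 0 < δ := lt_min hε hq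
  have hx := h (-δ) (by linarith [min_le_left ε (-k1 / (2 * M))]) (by linarith)
  have habs : -(k2 * δ) ≤ |k2| * δ := by
    have := neg_abs_le (k2 * δ)
    rw [abs_mul, abs_of_pos hδ0] at this; linarith
  have h1 : |k2| * δ ≤ |k2| * (-k1 / (2 * M)) :=
    mul_le_mul_of_nonneg_left hδ2 (abs_nonneg k2)
  have hk2M : |k2| ≤ M := by rw [hM]; linarith
  have h2 : |k2| * (-k1 / (2 * M)) ≤ M * (-k1 / (2 * M)) :=
    mul_le_mul_of_nonneg_right hk2M hq.le
  have h2' : M * (-k1 / (2 * M)) = -k1 / 2 := by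
    field_simp
  have hneg : 0 < -(k1 - k2 * δ) := by nlinarith
  have hprod := mul_pos hδ0 hneg
  nlinarith [hx, hprod]

lemma right_max_coeff (k0 k1 k2 ε : ℝ) (hε : 0 < ε)
    (h : ∀ x : ℝ, 0 ≤ x → x ≤ ε → k0 + k1 * x + k2 * x ^ 2 ≤ k0) : k1 ≤ 0 := by
  have := left_max_coeff k0 (-k1) k2 ε hε (fun x hx1 hx2 => by
    have := h (-x) (by linarith) (by linarith)
    nlinarith [this])
  linarith

lemma area_bound {Δ D τ E' k1 k2 : ℝ} (hΔ : 0 < Δ) (hD : 0 < D) (hτ : 0 ≤ τ)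
    (hC1 : 0 ≤ D + Δ * k1) (hC2 : D + Δ * k2 ≤ 0)
    (hE1 : E' ≤ D + k1 * (τ - Δ)) (hE2 : E' ≤ D + k2 * (τ - Δ)) :
    τ * E' ≤ Δ * D := by
  rcases le_total τ Δ with h | h
  · have key : τ * E' ≤ τ * (D + k1 * (τ - Δ)) := mul_le_mul_of_nonneg_left hE1 hτ
    nlinarith [key, mul_nonneg (mul_nonneg hτ (sub_nonneg.2 h)) hC1, sq_nonneg (Δ - τ),
      mul_pos hΔ hD]
  · have key : τ * E' ≤ τ * (D + k2 * (τ - Δ)) := mul_le_mul_of_nonneg_left hE2 hτ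
    nlinarith [key, mul_nonneg (mul_nonneg hτ (sub_nonneg.2 h))
      (by linarith : (0:ℝ) ≤ -D - Δ * k2), sq_nonneg (τ - Δ), mul_pos hΔ hD]

lemma span_top (S : Finset Pt) (hS : ¬ Collinear ℝ (S : Set Pt)) :
    affineSpan ℝ (S : Set Pt) = ⊤ := by
  by_contra h
  apply hS
  rcases (S : Set Pt).eq_empty_or_nonempty with he | hne
  · rw [he]; exact collinear_empty ℝ Pt
  · have hv : vectorSpan ℝ (S : Set Pt) ≠ ⊤ := by
      intro hv
      exact h ((AffineSubspace.affineSpan_eq_top_iff_vectorSpan_eq_top_of_nonempty ℝ Pt Pt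
        hne).2 hv)
    have hlt : Module.finrank ℝ (vectorSpan ℝ (S : Set Pt)) < Module.finrank ℝ Pt :=
      Submodule.finrank_lt hv
    have h2 : Module.finrank ℝ Pt = 2 := by
      simp [Module.finrank_prod]
    rw [collinear_iff_finrank_le_one]
    omega

lemma mem_of_close {P : Set Pt} {x₀ : Pt} {r : ℝ} (hball : Metric.ball x₀ r ⊆ P)
    (z : Pt) (h1 : |z.1 - x₀.1| < r) (h2 : |z.2 - x₀.2| < r) : z ∈ P := by
  apply hball
  rw [Metric.mem_ball, Prod.dist_eq]
  exact max_lt (by rwa [Real.dist_eq]) (by rwa [Real.dist_eq])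

set_option maxHeartbeats 4000000 in
/-- A candidate-anchored triangle `abc` (with `u` outer normal to side
`bc` and `-u` outer normal to `P` at `a`) is anchored to `u` if and only if
`Q₋₊(a,b,c) ≥ 0` and `Q₊₋(a,b,c) ≤ 0`, where `Q₋₊` (resp. `Q₊₋`) is the derivative of
the area along the family determined by the backward tangent at `b` and forward tangent
at `c` (resp. forward tangent at `b` and backward tangent at `c`). -/
theorem stmt_15 (S : Finset Pt) (hS : ¬ Collinear ℝ (S : Set Pt))
    (P : Set Pt) (hP : P = convexHull ℝ (S : Set Pt))
    (u : Pt) (hu : u.1 ^ 2 + u.2 ^ 2 = 1)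
    (a b c : Pt) (ha : a ∈ P) (hbP : b ∈ P) (hcP : c ∈ P)
    (hccw : 0 ≤ wedge (b - a) (c - a)) (hbcu : dotp (c - b) u = 0)
    (hamin : ∀ x ∈ P, dotp a u ≤ dotp x u)
    (vp vm wp wm : Pt)
    (hvp : FwdTangent P b vp) (hvm : BwdTangent P b vm)
    (hwp : FwdTangent P c wp) (hwm : BwdTangent P c wm)
    (hvpu : dotp vp u ≠ 0) (hvmu : dotp vm u ≠ 0)
    (hwpu : dotp wp u ≠ 0) (hwmu : dotp wm u ≠ 0) (hbc : b ≠ c) :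
    Anchored P u a b c ↔
      ((∀ q : ℝ, HasDerivAt (slideFam a b c vm wp u) q 0 → 0 ≤ q) ∧
       (∀ q : ℝ, HasDerivAt (slideFam a b c vp wm u) q 0 → q ≤ 0)) := by
  have hyc : dotp c u = dotp b u := level_eq hbcu
  have hPclosed : IsClosed P := hP ▸ S.finite_toSet.isClosed_convexHull ℝ
  have hfr : frontier P ⊆ P := hPclosed.frontier_subset
  have hcb0 : c - b ≠ 0 := sub_ne_zero.2 (Ne.symm hbc)
  have hL : 0 < elen (c - b) := by
    rw [elen]
    apply Real.sqrt_pos.2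
    have h1 : (c - b).1 ≠ 0 ∨ (c - b).2 ≠ 0 := by
      by_contra hcon
      push_neg at hcon
      exact hcb0 (Prod.ext hcon.1 hcon.2)
    rcases h1 with h1 | h1 <;>
      nlinarith [sq_nonneg (c - b).1, sq_nonneg (c - b).2, abs_pos.2 h1, sq_abs (c - b).1,
        sq_abs (c - b).2, mul_pos (abs_pos.2 h1) (abs_pos.2 h1)]
  have hΔnn : 0 ≤ dotp b u - dotp a u := sub_nonneg.2 (hamin b hbP)
  have hccw' : wedge (b - a) (c - a)
      = (dotp b u - dotp a u) * (wedge u c - wedge u b) := wedge_level u hu a b c hyc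
  have hDne : wedge u c - wedge u b ≠ 0 := by
    intro h0
    exact hbc (pt_ext u hu b c hyc.symm (by linarith))
  have hDeriv : ∀ v w : Pt, HasDerivAt (slideFam a b c v w u)
      (elen (c - b) / dotp v u * wedge v (c - a)
        + elen (c - b) / dotp w u * wedge (b - a) w) 0 := by
    intro v w
    rw [slideFam_eq]
    exact hasDerivAt_quadratic _ _ _
  have hABC : triArea a b c = wedge (b - a) (c - a) / 2 := by
    rw [triArea, abs_of_nonneg hccw]
  rcases eq_or_lt_of_le hΔnn with hΔ0 | hΔpos
  · -- degenerate case : the chord is at the bottom level; both sides are false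
    have hnotR : ¬ ((∀ q : ℝ, HasDerivAt (slideFam a b c vm wp u) q 0 → 0 ≤ q) ∧
        (∀ q : ℝ, HasDerivAt (slideFam a b c vp wm u) q 0 → q ≤ 0)) := by
      rintro ⟨h1, h2⟩
      have e1 := h1 _ (hDeriv vm wp)
      have e2 := h2 _ (hDeriv vp wm)
      rw [K1_eq u a b c vm wp hu _ hvmu hwpu hyc, ← hΔ0] at e1
      rw [K1_eq u a b c vp wm hu _ hvpu hwmu hyc, ← hΔ0] at e2
      have hd1 : 0 ≤ wedge u c - wedge u b := by nlinarith [e1, hL]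
      have hd2 : wedge u c - wedge u b ≤ 0 := by nlinarith [e2, hL]
      exact hDne (le_antisymm hd2 hd1)
    have hnotA : ¬ Anchored P u a b c := by
      rintro ⟨-, hmax⟩
      have hint : (interior P).Nonempty := by
        rw [hP, (convex_convexHull ℝ _).interior_nonempty_iff_affineSpan_eq_top,
          affineSpan_convexHull]
        exact span_top S hS
      obtain ⟨x₀, hx₀⟩ := hint
      obtain ⟨r, hr, hball⟩ := Metric.mem_nhds_iff.1 (mem_interior_iff_mem_nhds.1 hx₀)
      have hu1 : |u.1| ≤ 1 := by
        rw [abs_le]; constructor <;> nlinarith [sq_nonneg u.2, sq_nonneg (u.1 - 1),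
          sq_nonneg (u.1 + 1)]
      have hu2 : |u.2| ≤ 1 := by
        rw [abs_le]; constructor <;> nlinarith [sq_nonneg u.1, sq_nonneg (u.2 - 1),
          sq_nonneg (u.2 + 1)]
      have hx₀P : x₀ ∈ P := interior_subset hx₀
      set c' : Pt := x₀ + (r / 2) • (-u.2, u.1) with hc'def
      have hc'P : c' ∈ P := by
        apply mem_of_close hball
        · have : c'.1 - x₀.1 = (r / 2) * (-u.2) := by
            simp [hc'def]
          rw [this, abs_mul, abs_neg, abs_of_pos (by linarith : (0:ℝ) < r / 2)]
          nlinarith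
        · have : c'.2 - x₀.2 = (r / 2) * u.1 := by
            simp [hc'def]
          rw [this, abs_mul, abs_of_pos (by linarith : (0:ℝ) < r / 2)]
          nlinarith
      have hzP : x₀ - (r / 2) • u ∈ P := by
        apply mem_of_close hball
        · have : (x₀ - (r / 2) • u).1 - x₀.1 = -((r / 2) * u.1) := by
            simp
          rw [this, abs_neg, abs_mul, abs_of_pos (by linarith : (0:ℝ) < r / 2)]
          nlinarith
        · have : (x₀ - (r / 2) • u).2 - x₀.2 = -((r / 2) * u.2) := by
            simp
          rw [this, abs_neg, abs_mul, abs_of_pos (by linarith : (0:ℝ) < r / 2)]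
          nlinarith
      have hyx₀ : dotp a u < dotp x₀ u := by
        have h1 := hamin _ hzP
        have h2 : dotp (x₀ - (r / 2) • u) u = dotp x₀ u - r / 2 := by
          simp only [dotp, Prod.fst_sub, Prod.snd_sub, Prod.smul_fst, Prod.smul_snd,
            smul_eq_mul]
          linear_combination (-(r / 2)) * hu
        rw [h2] at h1
        linarith
      have hyc' : dotp c' u = dotp x₀ u := by
        simp only [hc'def, dotp, Prod.fst_add, Prod.snd_add, Prod.smul_fst, Prod.smul_snd,
          smul_eq_mul]
        ring
      have hsc' : wedge u c' - wedge u x₀ = r / 2 := by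
        simp only [hc'def, wedge, Prod.fst_add, Prod.snd_add, Prod.smul_fst, Prod.smul_snd,
          smul_eq_mul]
        linear_combination (r / 2) * hu
      have hwpos : 0 < wedge (x₀ - a) (c' - a) := by
        rw [wedge_level u hu a x₀ c' hyc']
        rw [hsc']
        have := sub_pos.2 hyx₀
        positivity
      have hIN : InscribedNormal P u a x₀ c' := by
        refine ⟨ha, hx₀P, hc'P, hwpos.le, ?_, hamin _ hx₀P⟩
        have : dotp (c' - x₀) u = 0 := by
          rw [dotp, Prod.fst_sub, Prod.snd_sub]
          have e1 : c'.1 - x₀.1 = (r / 2) * (-u.2) := by simp [hc'def]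
          have e2 : c'.2 - x₀.2 = (r / 2) * u.1 := by simp [hc'def]
          rw [e1, e2]; ring
        exact this
      have hle := hmax a x₀ c' hIN
      have hA0 : triArea a b c = 0 := by
        rw [hABC, hccw', ← hΔ0]
        ring
      have hApos : 0 < triArea a x₀ c' := by
        rw [triArea, abs_of_nonneg hwpos.le]
        positivity
      rw [hA0] at hle
      linarith
    exact iff_of_false hnotA hnotR
  · -- main case : the chord is strictly above `a`
    have hDpos : 0 < wedge u c - wedge u b := by
      have h0 : 0 ≤ (dotp b u - dotp a u) * (wedge u c - wedge u b) := hccw' ▸ hccw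
      have hDge : 0 ≤ wedge u c - wedge u b := by
        by_contra hcon
        push_neg at hcon
        nlinarith [mul_pos hΔpos (neg_pos.2 hcon)]
      exact lt_of_le_of_ne hDge (Ne.symm hDne)
    have hyvm : 0 < dotp vm u := by
      have h0 := hvm.2 c hcP
      rw [wedge_dir u hu vm c b, hyc, sub_self, mul_zero, sub_zero] at h0
      refine lt_of_le_of_ne ?_ (Ne.symm hvmu)
      by_contra hcon
      push_neg at hcon
      nlinarith [mul_pos (neg_pos.2 (lt_of_le_of_ne hcon.le hvmu)) hDpos]
    have hyvp : 0 < dotp vp u := by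
      have h0 := hvp.2 c hcP
      rw [wedge_dir u hu vp c b, hyc, sub_self, mul_zero, sub_zero] at h0
      refine lt_of_le_of_ne ?_ (Ne.symm hvpu)
      by_contra hcon
      push_neg at hcon
      nlinarith [mul_pos (neg_pos.2 (lt_of_le_of_ne hcon.le hvpu)) hDpos]
    have hywp : dotp wp u < 0 := by
      have h0 := hwp.2 b hbP
      rw [wedge_dir u hu wp b c, hyc, sub_self, mul_zero, sub_zero] at h0
      refine lt_of_le_of_ne ?_ hwpu
      by_contra hcon
      push_neg at hcon
      nlinarith [mul_pos (lt_of_le_of_ne hcon.le (Ne.symm hwpu)) hDpos]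
    have hywm : dotp wm u < 0 := by
      have h0 := hwm.2 b hbP
      rw [wedge_dir u hu wm b c, hyc, sub_self, mul_zero, sub_zero] at h0
      refine lt_of_le_of_ne ?_ hwmu
      by_contra hcon
      push_neg at hcon
      nlinarith [mul_pos (lt_of_le_of_ne hcon.le (Ne.symm hwmu)) hDpos]
    have hposnbhd : ∀ v w : Pt, ∃ ε₃ > (0:ℝ), ∀ x : ℝ, |x| < ε₃ →
        0 < slideFam a b c v w u x := by
      intro v w
      have hcont : ContinuousAt (slideFam a b c v w u) 0 := (hDeriv v w).continuousAt
      have hpos0 : 0 < slideFam a b c v w u 0 := by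
        have h00 : slideFam a b c v w u 0 = wedge (b - a) (c - a) := by
          rw [slideFam_eq]
          simp
        rw [h00, hccw']
        exact mul_pos hΔpos hDpos
      have hev := hcont.eventually (eventually_gt_nhds hpos0)
      obtain ⟨ε₃, hε₃, hb3⟩ := Metric.eventually_nhds_iff.1 hev
      exact ⟨ε₃, hε₃, fun x hx => hb3 (by rwa [Real.dist_eq, sub_zero])⟩
    constructor
    · intro hanch
      constructor
      · intro q hq
        rw [hq.unique (hDeriv vm wp)]
        obtain ⟨ε₁, hε₁, hseg1⟩ := hvm.1
        obtain ⟨ε₂, hε₂, hseg2⟩ := hwp.1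
        obtain ⟨ε₃, hε₃, hpos3⟩ := hposnbhd vm wp
        set ε := min (min (ε₁ * dotp vm u / elen (c - b))
          (ε₂ * (-(dotp wp u)) / elen (c - b))) (ε₃ / 2) with hεdef
        have hεpos : 0 < ε := lt_min (lt_min (div_pos (mul_pos hε₁ hyvm) hL)
          (div_pos (mul_pos hε₂ (neg_pos.2 hywp)) hL)) (by linarith)
        refine left_max_coeff (wedge (b - a) (c - a)) _
          (elen (c - b) / dotp vm u * (elen (c - b) / dotp wp u) * wedge vm wp) ε hεpos
          (fun x hx1 hx2 => ?_)
        have hsf : slideFam a b c vm wp u x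
            = wedge (b - a) (c - a)
              + (elen (c - b) / dotp vm u * wedge vm (c - a)
                 + elen (c - b) / dotp wp u * wedge (b - a) wp) * x
              + elen (c - b) / dotp vm u * (elen (c - b) / dotp wp u) * wedge vm wp * x ^ 2 := by
          rw [slideFam_eq]
        rw [← hsf]
        have hx0 : 0 < slideFam a b c vm wp u x := by
          apply hpos3
          rw [abs_of_nonpos hx2]
          have h9 : ε ≤ ε₃ / 2 := min_le_right _ _
          linarith
        have hbhP : b + (elen (c - b) * x / dotp vm u) • vm ∈ P := by
          have ht1a : 0 ≤ -(elen (c - b) * x) / dotp vm u :=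
            div_nonneg (by nlinarith) hyvm.le
          have ht1b : -(elen (c - b) * x) / dotp vm u ≤ ε₁ := by
            rw [div_le_iff₀ hyvm]
            have hεle : ε ≤ ε₁ * dotp vm u / elen (c - b) :=
              le_trans (min_le_left _ _) (min_le_left _ _)
            have h5 : -x ≤ ε₁ * dotp vm u / elen (c - b) := by linarith
            calc -(elen (c - b) * x) = elen (c - b) * (-x) := by ring
              _ ≤ elen (c - b) * (ε₁ * dotp vm u / elen (c - b)) :=
                  mul_le_mul_of_nonneg_left h5 hL.le
              _ = ε₁ * dotp vm u := by field_simp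
          have heq : b + (elen (c - b) * x / dotp vm u) • vm
              = b - (-(elen (c - b) * x) / dotp vm u) • vm := by
            have h8 : elen (c - b) * x / dotp vm u
                = -(-(elen (c - b) * x) / dotp vm u) := by ring
            rw [h8, neg_smul, ← sub_eq_add_neg]
          rw [heq]
          exact hfr (hseg1 _ ⟨ht1a, ht1b⟩)
        have hchP : c + (elen (c - b) * x / dotp wp u) • wp ∈ P := by
          have ht2a : 0 ≤ elen (c - b) * x / dotp wp u :=
            div_nonneg_of_nonpos (by nlinarith) hywp.le
          have ht2b : elen (c - b) * x / dotp wp u ≤ ε₂ := by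
            rw [div_le_iff_of_neg hywp]
            have hεle : ε ≤ ε₂ * (-(dotp wp u)) / elen (c - b) :=
              le_trans (min_le_left _ _) (min_le_right _ _)
            have h5 : -x ≤ ε₂ * (-(dotp wp u)) / elen (c - b) := by linarith
            have h6 : elen (c - b) * (-x)
                ≤ elen (c - b) * (ε₂ * (-(dotp wp u)) / elen (c - b)) :=
              mul_le_mul_of_nonneg_left h5 hL.le
            have h7 : elen (c - b) * (ε₂ * (-(dotp wp u)) / elen (c - b))
                = ε₂ * (-(dotp wp u)) := by field_simp
            nlinarith [h6, h7]
          exact hfr (hseg2 _ ⟨ht2a, ht2b⟩)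
        have hIN : InscribedNormal P u a (b + (elen (c - b) * x / dotp vm u) • vm)
            (c + (elen (c - b) * x / dotp wp u) • wp) :=
          ⟨ha, hbhP, hchP, hx0.le,
            level_slide u b c vm wp (elen (c - b) * x) hvmu hwpu hbcu, hamin _ hbhP⟩
        have hle := hanch.2 _ _ _ hIN
        have e9 : wedge ((b + (elen (c - b) * x / dotp vm u) • vm) - a)
            ((c + (elen (c - b) * x / dotp wp u) • wp) - a) = slideFam a b c vm wp u x := rfl
        rw [triArea, e9, abs_of_nonneg hx0.le, hABC] at hle
        linarith
      · intro q hq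
        rw [hq.unique (hDeriv vp wm)]
        obtain ⟨ε₁, hε₁, hseg1⟩ := hvp.1
        obtain ⟨ε₂, hε₂, hseg2⟩ := hwm.1
        obtain ⟨ε₃, hε₃, hpos3⟩ := hposnbhd vp wm
        set ε := min (min (ε₁ * dotp vp u / elen (c - b))
          (ε₂ * (-(dotp wm u)) / elen (c - b))) (ε₃ / 2) with hεdef
        have hεpos : 0 < ε := lt_min (lt_min (div_pos (mul_pos hε₁ hyvp) hL)
          (div_pos (mul_pos hε₂ (neg_pos.2 hywm)) hL)) (by linarith)
        refine right_max_coeff (wedge (b - a) (c - a)) _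
          (elen (c - b) / dotp vp u * (elen (c - b) / dotp wm u) * wedge vp wm) ε hεpos
          (fun x hx1 hx2 => ?_)
        have hsf : slideFam a b c vp wm u x
            = wedge (b - a) (c - a)
              + (elen (c - b) / dotp vp u * wedge vp (c - a)
                 + elen (c - b) / dotp wm u * wedge (b - a) wm) * x
              + elen (c - b) / dotp vp u * (elen (c - b) / dotp wm u) * wedge vp wm * x ^ 2 := by
          rw [slideFam_eq]
        rw [← hsf]
        have hx0 : 0 < slideFam a b c vp wm u x := by
          apply hpos3
          rw [abs_of_nonneg hx1]
          have h9 : ε ≤ ε₃ / 2 := min_le_right _ _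
          linarith
        have hbhP : b + (elen (c - b) * x / dotp vp u) • vp ∈ P := by
          have ht1a : 0 ≤ elen (c - b) * x / dotp vp u :=
            div_nonneg (by nlinarith) hyvp.le
          have ht1b : elen (c - b) * x / dotp vp u ≤ ε₁ := by
            rw [div_le_iff₀ hyvp]
            have hεle : ε ≤ ε₁ * dotp vp u / elen (c - b) :=
              le_trans (min_le_left _ _) (min_le_left _ _)
            have h5 : x ≤ ε₁ * dotp vp u / elen (c - b) := by linarith
            calc elen (c - b) * x ≤ elen (c - b) * (ε₁ * dotp vp u / elen (c - b)) :=
                  mul_le_mul_of_nonneg_left h5 hL.le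
              _ = ε₁ * dotp vp u := by field_simp
          exact hfr (hseg1 _ ⟨ht1a, ht1b⟩)
        have hchP : c + (elen (c - b) * x / dotp wm u) • wm ∈ P := by
          have ht2a : 0 ≤ -(elen (c - b) * x) / dotp wm u :=
            div_nonneg_of_nonpos (by nlinarith) hywm.le
          have ht2b : -(elen (c - b) * x) / dotp wm u ≤ ε₂ := by
            rw [div_le_iff_of_neg hywm]
            have hεle : ε ≤ ε₂ * (-(dotp wm u)) / elen (c - b) :=
              le_trans (min_le_left _ _) (min_le_right _ _)
            have h5 : x ≤ ε₂ * (-(dotp wm u)) / elen (c - b) := by linarith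
            have h6 : elen (c - b) * x
                ≤ elen (c - b) * (ε₂ * (-(dotp wm u)) / elen (c - b)) :=
              mul_le_mul_of_nonneg_left h5 hL.le
            have h7 : elen (c - b) * (ε₂ * (-(dotp wm u)) / elen (c - b))
                = ε₂ * (-(dotp wm u)) := by field_simp
            nlinarith [h6, h7]
          have heq : c + (elen (c - b) * x / dotp wm u) • wm
              = c - (-(elen (c - b) * x) / dotp wm u) • wm := by
            have h8 : elen (c - b) * x / dotp wm u
                = -(-(elen (c - b) * x) / dotp wm u) := by ring
            rw [h8, neg_smul, ← sub_eq_add_neg]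
          rw [heq]
          exact hfr (hseg2 _ ⟨ht2a, ht2b⟩)
        have hIN : InscribedNormal P u a (b + (elen (c - b) * x / dotp vp u) • vp)
            (c + (elen (c - b) * x / dotp wm u) • wm) :=
          ⟨ha, hbhP, hchP, hx0.le,
            level_slide u b c vp wm (elen (c - b) * x) hvpu hwmu hbcu, hamin _ hbhP⟩
        have hle := hanch.2 _ _ _ hIN
        have e9 : wedge ((b + (elen (c - b) * x / dotp vp u) • vp) - a)
            ((c + (elen (c - b) * x / dotp wm u) • wm) - a) = slideFam a b c vp wm u x := rfl
        rw [triArea, e9, abs_of_nonneg hx0.le, hABC] at hle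
        linarith
    · rintro ⟨h1, h2⟩
      have e1 := h1 _ (hDeriv vm wp)
      have e2 := h2 _ (hDeriv vp wm)
      rw [K1_eq u a b c vm wp hu _ hvmu hwpu hyc] at e1
      rw [K1_eq u a b c vp wm hu _ hvpu hwmu hyc] at e2
      have hC1 : 0 ≤ (wedge u c - wedge u b)
          + (dotp b u - dotp a u) * (wedge u wp / dotp wp u - wedge u vm / dotp vm u) := by
        by_contra hcon
        push_neg at hcon
        nlinarith [mul_pos hL (neg_pos.2 hcon)]
      have hC2 : (wedge u c - wedge u b)
          + (dotp b u - dotp a u) * (wedge u wm / dotp wm u - wedge u vp / dotp vp u) ≤ 0 := by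
        by_contra hcon
        push_neg at hcon
        nlinarith [mul_pos hL hcon]
      refine ⟨⟨ha, hbP, hcP, hccw, hbcu, hamin b hbP⟩, ?_⟩
      rintro a' b' c' ⟨ha', hb', hc', hw', hbc', hab'⟩
      have hyc2 : dotp c' u = dotp b' u := level_eq hbc'
      have hval : 0 ≤ (dotp b' u - dotp a' u) * (wedge u c' - wedge u b') := by
        rw [← wedge_level u hu a' b' c' hyc2]
        exact hw'
      have hA' : triArea a' b' c'
          = (dotp b' u - dotp a' u) * (wedge u c' - wedge u b') / 2 := by
        rw [triArea, wedge_level u hu a' b' c' hyc2, abs_of_nonneg hval]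
      rw [hA', hABC, hccw']
      have hya' : dotp a u ≤ dotp a' u := hamin a' ha'
      have hab2 : dotp a' u ≤ dotp b' u := hab'
      rcases le_or_gt (wedge u c' - wedge u b') 0 with hE | hE
      · have h3 : (dotp b' u - dotp a' u) * (wedge u c' - wedge u b') ≤ 0 :=
          mul_nonpos_of_nonneg_of_nonpos (by linarith) hE
        nlinarith [mul_pos hΔpos hDpos]
      · have hτ : 0 ≤ dotp b' u - dotp a u := by linarith
        have hstep : (dotp b' u - dotp a' u) * (wedge u c' - wedge u b')
            ≤ (dotp b' u - dotp a u) * (wedge u c' - wedge u b') :=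
          mul_le_mul_of_nonneg_right (by linarith) hE.le
        have hb1 : wedge u vm / dotp vm u * (dotp b' u - dotp b u)
            ≤ wedge u b' - wedge u b := by
          rw [div_mul_eq_mul_div, div_le_iff₀ hyvm]
          have h0 := hvm.2 b' hb'
          rw [wedge_dir u hu vm b' b] at h0
          nlinarith [h0]
        have hb2 : wedge u vp / dotp vp u * (dotp b' u - dotp b u)
            ≤ wedge u b' - wedge u b := by
          rw [div_mul_eq_mul_div, div_le_iff₀ hyvp]
          have h0 := hvp.2 b' hb'
          rw [wedge_dir u hu vp b' b] at h0
          nlinarith [h0]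
        have hc1 : wedge u c' - wedge u c
            ≤ wedge u wp / dotp wp u * (dotp b' u - dotp b u) := by
          rw [div_mul_eq_mul_div, le_div_iff_of_neg hywp]
          have h0 := hwp.2 c' hc'
          rw [wedge_dir u hu wp c' c, hyc2, hyc] at h0
          nlinarith [h0]
        have hc2 : wedge u c' - wedge u c
            ≤ wedge u wm / dotp wm u * (dotp b' u - dotp b u) := by
          rw [div_mul_eq_mul_div, le_div_iff_of_neg hywm]
          have h0 := hwm.2 c' hc'
          rw [wedge_dir u hu wm c' c, hyc2, hyc] at h0
          nlinarith [h0]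
        have hE1 : wedge u c' - wedge u b' ≤ (wedge u c - wedge u b)
            + (wedge u wp / dotp wp u - wedge u vm / dotp vm u)
              * ((dotp b' u - dotp a u) - (dotp b u - dotp a u)) := by
          have hlin : (wedge u wp / dotp wp u - wedge u vm / dotp vm u)
              * ((dotp b' u - dotp a u) - (dotp b u - dotp a u))
              = wedge u wp / dotp wp u * (dotp b' u - dotp b u)
                - wedge u vm / dotp vm u * (dotp b' u - dotp b u) := by ring
          rw [hlin]
          linarith [hb1, hc1]
        have hE2 : wedge u c' - wedge u b' ≤ (wedge u c - wedge u b)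
            + (wedge u wm / dotp wm u - wedge u vp / dotp vp u)
              * ((dotp b' u - dotp a u) - (dotp b u - dotp a u)) := by
          have hlin : (wedge u wm / dotp wm u - wedge u vp / dotp vp u)
              * ((dotp b' u - dotp a u) - (dotp b u - dotp a u))
              = wedge u wm / dotp wm u * (dotp b' u - dotp b u)
                - wedge u vp / dotp vp u * (dotp b' u - dotp b u) := by ring
          rw [hlin]
          linarith [hb2, hc2]
        have harea := area_bound hΔpos hDpos hτ hC1 hC2 hE1 hE2
        linarith [hstep, harea]
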